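/- Lower-bounding lemma (Lemma 3): if g_i(x) ≤ V*(x) for all x and i = 0,…,I, and optimal dual variables (ν̂*, λ̂_c*, λ̂_β*, λ̂_α*) exist for the one-stage dual problem at parameter x̂, then the function g_{I+1}(x) := φ(x)ᵀλ̂_β* − h(x)ᵀλ̂_c* + f_x(x)ᵀν̂* + ζ₁(ν̂*,λ̂_α*) + ζ₂(x,ν̂*,λ̂_c*,λ̂_β*) satisfies g_{I+1}(x) ≤ V*(x) for all x ∈ X. -/

import Mathlib

open Matrix

/-- The dual objective of the parametric one-stage problem:
`φ(x)ᵀlamb − h(x)ᵀlamc + f_x(x)ᵀν + ζ₁(ν,lama) + ζ₂(x,ν,lamc,lamb)`, where `ζ₁` and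
`ζ₂` are the infima of the Lagrangian over the successor state `x₊` and the
input `u ∈ U` respectively. -/
noncomputable def dualObj {n m nc Jn Ic : ℕ} (Uset : Set (Fin m → ℝ))
    (fx : (Fin n → ℝ) → Fin n → ℝ) (Fu : (Fin n → ℝ) → Matrix (Fin n) (Fin m) ℝ)
    (E : Matrix (Fin nc) (Fin m) ℝ) (hb : (Fin n → ℝ) → Fin nc → ℝ)
    (φ : Fin Jn → (Fin n → ℝ) → ℝ) (r : Fin Jn → Fin m → ℝ)
    (R : Fin Jn → Matrix (Fin m) (Fin m) ℝ) (g : Fin Ic → (Fin n → ℝ) → ℝ)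
    (x ν : Fin n → ℝ) (lamc : Fin nc → ℝ) (lamb : Fin Jn → ℝ) (lama : Fin Ic → ℝ) : ℝ :=
  (∑ j, lamb j * φ j x) - (lamc ⬝ᵥ hb x) + (ν ⬝ᵥ fx x)
  + sInf {v : ℝ | ∃ xp : Fin n → ℝ, v = -(ν ⬝ᵥ xp) + ∑ i, lama i * g i xp}
  + sInf {v : ℝ | ∃ u ∈ Uset, v =
      (ν ⬝ᵥ (Fu x).mulVec u + lamc ⬝ᵥ E.mulVec u + ∑ j, lamb j * (r j ⬝ᵥ u))
      + (1 / 2) * (u ⬝ᵥ (∑ j, lamb j • R j).mulVec u)}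

/-- Dual feasibility for the one-stage problem with parameter `x`: the explicit
constraints `Lᵀlamb = 1`, `1ᵀlama = γ`, nonnegativity, together with the implicit
constraints that the Lagrangian infima `ζ₁` and `ζ₂` be bounded below. -/
def dualFeas {n m nc Jn Ic K : ℕ} (Uset : Set (Fin m → ℝ))
    (Fu : (Fin n → ℝ) → Matrix (Fin n) (Fin m) ℝ)
    (E : Matrix (Fin nc) (Fin m) ℝ)
    (r : Fin Jn → Fin m → ℝ) (R : Fin Jn → Matrix (Fin m) (Fin m) ℝ)
    (g : Fin Ic → (Fin n → ℝ) → ℝ) (γ : ℝ) (kof : Fin Jn → Fin K)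
    (x ν : Fin n → ℝ) (lamc : Fin nc → ℝ) (lamb : Fin Jn → ℝ) (lama : Fin Ic → ℝ) : Prop :=
  (∀ k, ∑ j ∈ Finset.univ.filter (fun j => kof j = k), lamb j = 1) ∧
  (∑ i, lama i = γ) ∧
  (∀ c, 0 ≤ lamc c) ∧ (∀ j, 0 ≤ lamb j) ∧ (∀ i, 0 ≤ lama i) ∧
  BddBelow {v : ℝ | ∃ xp : Fin n → ℝ, v = -(ν ⬝ᵥ xp) + ∑ i, lama i * g i xp} ∧
  BddBelow {v : ℝ | ∃ u ∈ Uset, v =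
      (ν ⬝ᵥ (Fu x).mulVec u + lamc ⬝ᵥ E.mulVec u + ∑ j, lamb j * (r j ⬝ᵥ u))
      + (1 / 2) * (u ⬝ᵥ (∑ j, lamb j • R j).mulVec u)}

/-- The set of primal objective values of the one-stage problem with
parameter `x` (epigraph form, successor state eliminated). -/
def primalSet {n m nc Jn Ic K : ℕ} (Uset : Set (Fin m → ℝ))
    (fx : (Fin n → ℝ) → Fin n → ℝ) (Fu : (Fin n → ℝ) → Matrix (Fin n) (Fin m) ℝ)
    (E : Matrix (Fin nc) (Fin m) ℝ) (hb : (Fin n → ℝ) → Fin nc → ℝ)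
    (φ : Fin Jn → (Fin n → ℝ) → ℝ) (r : Fin Jn → Fin m → ℝ)
    (R : Fin Jn → Matrix (Fin m) (Fin m) ℝ) (g : Fin Ic → (Fin n → ℝ) → ℝ)
    (γ : ℝ) (kof : Fin Jn → Fin K) (x : Fin n → ℝ) : Set ℝ :=
  {c : ℝ | ∃ u ∈ Uset, ∃ β : Fin K → ℝ, ∃ α : ℝ,
    (∀ cc, E.mulVec u cc ≤ hb x cc) ∧
    (∀ j, φ j x + r j ⬝ᵥ u + (1 / 2) * (u ⬝ᵥ (R j).mulVec u) ≤ β (kof j)) ∧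
    (∀ i, g i (fx x + (Fu x).mulVec u) ≤ α) ∧
    c = (∑ k, β k) + γ * α}



lemma my_sum_mulVec {m Jn : ℕ} (A : Fin Jn → Matrix (Fin m) (Fin m) ℝ) (x : Fin m → ℝ) :
    (∑ j, A j) *ᵥ x = ∑ j, (A j) *ᵥ x := by
  ext i
  simp only [Matrix.mulVec, dotProduct, Matrix.sum_apply, Finset.sum_apply,
    Finset.sum_mul]
  exact Finset.sum_comm

lemma dp_sum {m Jn : ℕ} (x : Fin m → ℝ) (v : Fin Jn → Fin m → ℝ) :
    x ⬝ᵥ (∑ j, v j) = ∑ j, x ⬝ᵥ v j := by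
  simp only [dotProduct, Finset.sum_apply, Finset.mul_sum]
  exact Finset.sum_comm

lemma sum_dp {m Jn : ℕ} (x : Fin m → ℝ) (v : Fin Jn → Fin m → ℝ) :
    (∑ j, v j) ⬝ᵥ x = ∑ j, v j ⬝ᵥ x := by
  rw [dotProduct_comm, dp_sum]
  exact Finset.sum_congr rfl fun j _ => dotProduct_comm _ _

lemma quad_lb {m : ℕ} (M : Matrix (Fin m) (Fin m) ℝ) (hM : M.PosDef) (b u : Fin m → ℝ) :
    -((1:ℝ)/2) * (M⁻¹.mulVec b ⬝ᵥ b) ≤ b ⬝ᵥ u + (1/2) * (u ⬝ᵥ M.mulVec u) := by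
  set w := M⁻¹.mulVec b with hw
  have hMw : M.mulVec w = b := by
    rw [hw, Matrix.mulVec_mulVec,
      Matrix.mul_nonsing_inv _ (isUnit_iff_ne_zero.mpr (ne_of_gt hM.det_pos)),
      Matrix.one_mulVec]
  have hsymm : ∀ v v' : Fin m → ℝ, v ⬝ᵥ M.mulVec v' = v' ⬝ᵥ M.mulVec v := by
    intro v v'
    rw [Matrix.dotProduct_mulVec, ← Matrix.mulVec_transpose, dotProduct_comm]
    congr 2
    rw [← Matrix.conjTranspose_eq_transpose_of_trivial, hM.1.eq]
  have key : 0 ≤ (u + w) ⬝ᵥ M.mulVec (u + w) := by simpa using hM.posSemidef.dotProduct_mulVec_nonneg (u + w)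
  have h1 : w ⬝ᵥ M.mulVec u = b ⬝ᵥ u := by rw [hsymm, hMw, dotProduct_comm]
  have h2 : u ⬝ᵥ M.mulVec w = b ⬝ᵥ u := by rw [hMw, dotProduct_comm]
  have h3 : w ⬝ᵥ M.mulVec w = w ⬝ᵥ b := by rw [hMw]
  have hexp : (u + w) ⬝ᵥ M.mulVec (u + w)
      = u ⬝ᵥ M.mulVec u + 2 * (b ⬝ᵥ u) + w ⬝ᵥ b := by
    simp only [Matrix.mulVec_add, dotProduct_add, add_dotProduct, h1, h2, h3]
    ring
  rw [hexp] at key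
  linarith

lemma sum_posdef {m Jn K : ℕ} (hK : 0 < K) (lamb : Fin Jn → ℝ)
    (R : Fin Jn → Matrix (Fin m) (Fin m) ℝ) (hR : ∀ j, (R j).PosDef)
    (kof : Fin Jn → Fin K)
    (hsum : ∀ k, ∑ j ∈ Finset.univ.filter (fun j => kof j = k), lamb j = 1)
    (hnn : ∀ j, 0 ≤ lamb j) : (∑ j, lamb j • R j).PosDef := by
  obtain ⟨j₀, hj₀⟩ : ∃ j₀, 0 < lamb j₀ := by
    by_contra h
    push_neg at h
    have h2 : (∑ j ∈ Finset.univ.filter (fun j => kof j = ⟨0, hK⟩), lamb j) ≤ 0 :=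
      Finset.sum_nonpos (fun j _ => h j)
    linarith [hsum ⟨0, hK⟩]
  rw [Matrix.posDef_iff_dotProduct_mulVec]
  constructor
  · show (∑ j, lamb j • R j)ᴴ = _
    rw [Matrix.conjTranspose_sum]
    refine Finset.sum_congr rfl fun j _ => ?_
    rw [Matrix.conjTranspose_smul]
    rw [show star (lamb j) = lamb j from rfl, (hR j).1.eq]
  · intro x hx
    have hxq : ∀ j, 0 ≤ lamb j * (x ⬝ᵥ (R j).mulVec x) := fun j =>
      mul_nonneg (hnn j) (by simpa using (hR j).posSemidef.dotProduct_mulVec_nonneg x)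
    have hj0q : 0 < lamb j₀ * (x ⬝ᵥ (R j₀).mulVec x) :=
      mul_pos hj₀ (by simpa using (hR j₀).dotProduct_mulVec_pos hx)
    have hrw : star x ⬝ᵥ (∑ j, lamb j • R j).mulVec x
        = ∑ j, lamb j * (x ⬝ᵥ (R j).mulVec x) := by
      rw [show (star x : Fin m → ℝ) = x from rfl, my_sum_mulVec (fun j => lamb j • R j),
        dp_sum]
      exact Finset.sum_congr rfl fun j _ => by
        rw [Matrix.smul_mulVec, dotProduct_smul, smul_eq_mul]
    rw [hrw]
    calc (0:ℝ) < lamb j₀ * (x ⬝ᵥ (R j₀).mulVec x) := hj0q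
      _ ≤ ∑ j, lamb j * (x ⬝ᵥ (R j).mulVec x) :=
        Finset.single_le_sum (fun j _ => hxq j) (Finset.mem_univ j₀)

/-- Lemma 3, lower-bounding lemma: if `g₀,…,g_I` are global
lower bounds on the optimal value function `V*` (a fixed point of the Bellman
operator for the one-stage problem with stage cost of Restriction 1 and
dynamics of Restriction 2), and optimal dual variables exist for the one-stage
dual problem at parameter `x̂`, then the dual-objective function
`g_{I+1}(x) = φ(x)ᵀλ̂β* − h(x)ᵀλ̂c* + f_x(x)ᵀν̂* + ζ₁ + ζ₂(x)` satisfies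
`g_{I+1}(x) ≤ V*(x)` for all `x`. -/
theorem stmt14 {n m nc Jn Ic K : ℕ} (hK : 0 < K) (hIc : 0 < Ic)
    (Uset : Set (Fin m → ℝ))
    (fx : (Fin n → ℝ) → Fin n → ℝ) (Fu : (Fin n → ℝ) → Matrix (Fin n) (Fin m) ℝ)
    (E : Matrix (Fin nc) (Fin m) ℝ) (hb : (Fin n → ℝ) → Fin nc → ℝ)
    (φ : Fin Jn → (Fin n → ℝ) → ℝ) (r : Fin Jn → Fin m → ℝ)
    (R : Fin Jn → Matrix (Fin m) (Fin m) ℝ) (g : Fin Ic → (Fin n → ℝ) → ℝ)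
    (γ : ℝ) (hγ0 : 0 < γ) (hγ1 : γ ≤ 1)
    (kof : Fin Jn → Fin K) (hkof : Function.Surjective kof)
    (hres : (∀ j, (R j).PosDef) ∨ (∃ B, ∀ x, Fu x = B))
    (Vstar : (Fin n → ℝ) → ℝ)
    -- Bellman optimality condition `V* = T V*` for the problem whose stage
    -- cost is `ℓ(z,u) = Σ_k max_{j : kof j = k} {φ_j(z) + r_jᵀu + ½uᵀR_j u}`,
    -- dynamics `z₊ = f_x(z) + F_u(z)u`, and constraints `Eu ≤ h(z)`, `u ∈ U`:
    (hfix : ∀ z, Vstar z = sInf {c : ℝ | ∃ u ∈ Uset,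
      (∀ cc, E.mulVec u cc ≤ hb z cc) ∧
      c = (∑ k, sSup {v : ℝ | ∃ j, kof j = k ∧
            v = φ j z + r j ⬝ᵥ u + (1 / 2) * (u ⬝ᵥ (R j).mulVec u)}) +
          γ * Vstar (fx z + (Fu z).mulVec u)})
    -- the problem is feasible at every state:
    (hfeasible : ∀ z : Fin n → ℝ, ∃ u ∈ Uset, ∀ cc, E.mulVec u cc ≤ hb z cc)
    -- `g₀,…,g_I` are global lower bounds on `V*`:
    (hlb : ∀ i z, g i z ≤ Vstar z)
    (xhat ν : Fin n → ℝ) (lamc : Fin nc → ℝ) (lamb : Fin Jn → ℝ) (lama : Fin Ic → ℝ)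
    -- optimal dual variables exist for the one-stage dual problem at `x̂`:
    (hfeas : dualFeas Uset Fu E r R g γ kof xhat ν lamc lamb lama)
    (hopt : dualObj Uset fx Fu E hb φ r R g xhat ν lamc lamb lama ∈
      upperBounds {c : ℝ | ∃ ν' lamc' lamb' lama',
        dualFeas Uset Fu E r R g γ kof xhat ν' lamc' lamb' lama' ∧
        c = dualObj Uset fx Fu E hb φ r R g xhat ν' lamc' lamb' lama'}) :
    ∀ x : Fin n → ℝ, dualObj Uset fx Fu E hb φ r R g x ν lamc lamb lama ≤ Vstar x := by
  obtain ⟨hsumb, hsuma, hlamc, hlamb, hlama, hbdd1, hbdd2hat⟩ := hfeas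
  intro x
  -- Boundedness below of the ζ₂ Lagrangian set at parameter x
  have hbdd2 : BddBelow {v : ℝ | ∃ u ∈ Uset, v =
      (ν ⬝ᵥ (Fu x).mulVec u + lamc ⬝ᵥ E.mulVec u + ∑ j, lamb j * (r j ⬝ᵥ u))
      + (1 / 2) * (u ⬝ᵥ (∑ j, lamb j • R j).mulVec u)} := by
    rcases hres with hRpd | ⟨B, hB⟩
    · -- PosDef case: complete the square
      set M : Matrix (Fin m) (Fin m) ℝ := ∑ j, lamb j • R j with hM
      have hMpd : M.PosDef := sum_posdef hK lamb R hRpd kof hsumb hlamb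
      set b : Fin m → ℝ := (Fu x)ᵀ.mulVec ν + Eᵀ.mulVec lamc + ∑ j, lamb j • r j with hbdef
      have hblin : ∀ u : Fin m → ℝ,
          ν ⬝ᵥ (Fu x).mulVec u + lamc ⬝ᵥ E.mulVec u + (∑ j, lamb j * (r j ⬝ᵥ u))
            = b ⬝ᵥ u := by
        intro u
        rw [hbdef, add_dotProduct, add_dotProduct]
        congr 1
        · congr 1
          · rw [Matrix.dotProduct_mulVec, ← Matrix.mulVec_transpose]
          · rw [Matrix.dotProduct_mulVec, ← Matrix.mulVec_transpose]
        · rw [sum_dp]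
          exact Finset.sum_congr rfl fun j _ => by
            rw [smul_dotProduct, smul_eq_mul]
      refine ⟨-((1:ℝ)/2) * (M⁻¹.mulVec b ⬝ᵥ b), ?_⟩
      rintro v ⟨u, hu, rfl⟩
      rw [hblin u]
      exact quad_lb M hMpd b u
    · -- constant-Fu case: the set coincides with the one at x̂
      have : {v : ℝ | ∃ u ∈ Uset, v =
          (ν ⬝ᵥ (Fu x).mulVec u + lamc ⬝ᵥ E.mulVec u + ∑ j, lamb j * (r j ⬝ᵥ u))
          + (1 / 2) * (u ⬝ᵥ (∑ j, lamb j • R j).mulVec u)}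
          = {v : ℝ | ∃ u ∈ Uset, v =
          (ν ⬝ᵥ (Fu xhat).mulVec u + lamc ⬝ᵥ E.mulVec u + ∑ j, lamb j * (r j ⬝ᵥ u))
          + (1 / 2) * (u ⬝ᵥ (∑ j, lamb j • R j).mulVec u)} := by
        simp only [hB]
      rw [this]
      exact hbdd2hat
  rw [hfix x]
  apply le_csInf
  · obtain ⟨u, hu, hc⟩ := hfeasible x
    exact ⟨_, u, hu, hc, rfl⟩
  · rintro c ⟨u, hu, hcc, rfl⟩
    set xp : Fin n → ℝ := fx x + (Fu x).mulVec u with hxp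
    have hz1 : sInf {v : ℝ | ∃ xp : Fin n → ℝ, v = -(ν ⬝ᵥ xp) + ∑ i, lama i * g i xp}
        ≤ -(ν ⬝ᵥ xp) + ∑ i, lama i * g i xp := csInf_le hbdd1 ⟨xp, rfl⟩
    have hz2 : sInf {v : ℝ | ∃ u ∈ Uset, v =
        (ν ⬝ᵥ (Fu x).mulVec u + lamc ⬝ᵥ E.mulVec u + ∑ j, lamb j * (r j ⬝ᵥ u))
        + (1 / 2) * (u ⬝ᵥ (∑ j, lamb j • R j).mulVec u)}
        ≤ (ν ⬝ᵥ (Fu x).mulVec u + lamc ⬝ᵥ E.mulVec u + ∑ j, lamb j * (r j ⬝ᵥ u))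
        + (1 / 2) * (u ⬝ᵥ (∑ j, lamb j • R j).mulVec u) :=
      csInf_le hbdd2 ⟨u, hu, rfl⟩
    have ha : ∑ i, lama i * g i xp ≤ γ * Vstar xp := by
      calc ∑ i, lama i * g i xp ≤ ∑ i, lama i * Vstar xp :=
            Finset.sum_le_sum fun i _ => mul_le_mul_of_nonneg_left (hlb i xp) (hlama i)
        _ = γ * Vstar xp := by rw [← Finset.sum_mul, hsuma]
    have hcE : lamc ⬝ᵥ E.mulVec u ≤ lamc ⬝ᵥ hb x :=
      Finset.sum_le_sum fun cc _ => mul_le_mul_of_nonneg_left (hcc cc) (hlamc cc)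
    have hνsplit : ν ⬝ᵥ xp = ν ⬝ᵥ fx x + ν ⬝ᵥ (Fu x).mulVec u := by
      rw [hxp, dotProduct_add]
    have hquad : (1 / 2 : ℝ) * (u ⬝ᵥ (∑ j, lamb j • R j).mulVec u)
        = ∑ j, lamb j * ((1 / 2) * (u ⬝ᵥ (R j).mulVec u)) := by
      rw [my_sum_mulVec (fun j => lamb j • R j), dp_sum, Finset.mul_sum]
      exact Finset.sum_congr rfl fun j _ => by
        rw [Matrix.smul_mulVec, dotProduct_smul, smul_eq_mul]; ring
    have hstage : (∑ j, lamb j * φ j x) + (∑ j, lamb j * (r j ⬝ᵥ u))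
        + (1 / 2) * (u ⬝ᵥ (∑ j, lamb j • R j).mulVec u)
        ≤ ∑ k, sSup {v : ℝ | ∃ j, kof j = k ∧
            v = φ j x + r j ⬝ᵥ u + (1 / 2) * (u ⬝ᵥ (R j).mulVec u)} := by
      have hcomb : (∑ j, lamb j * φ j x) + (∑ j, lamb j * (r j ⬝ᵥ u))
          + (1 / 2) * (u ⬝ᵥ (∑ j, lamb j • R j).mulVec u)
          = ∑ j, lamb j * (φ j x + r j ⬝ᵥ u + (1 / 2) * (u ⬝ᵥ (R j).mulVec u)) := by
        rw [hquad, ← Finset.sum_add_distrib, ← Finset.sum_add_distrib]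
        exact Finset.sum_congr rfl fun j _ => by ring
      rw [hcomb, ← Finset.sum_fiberwise Finset.univ kof
        (fun j => lamb j * (φ j x + r j ⬝ᵥ u + (1 / 2) * (u ⬝ᵥ (R j).mulVec u)))]
      refine Finset.sum_le_sum fun k _ => ?_
      have hbdda : BddAbove {v : ℝ | ∃ j, kof j = k ∧
          v = φ j x + r j ⬝ᵥ u + (1 / 2) * (u ⬝ᵥ (R j).mulVec u)} := by
        apply Set.Finite.bddAbove
        apply (Set.finite_range
          (fun j : Fin Jn => φ j x + r j ⬝ᵥ u + (1 / 2) * (u ⬝ᵥ (R j).mulVec u))).subset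
        rintro v ⟨j, _, rfl⟩
        exact ⟨j, rfl⟩
      calc ∑ j ∈ Finset.univ.filter (fun j => kof j = k),
            lamb j * (φ j x + r j ⬝ᵥ u + (1 / 2) * (u ⬝ᵥ (R j).mulVec u))
          ≤ ∑ j ∈ Finset.univ.filter (fun j => kof j = k),
            lamb j * sSup {v : ℝ | ∃ j, kof j = k ∧
              v = φ j x + r j ⬝ᵥ u + (1 / 2) * (u ⬝ᵥ (R j).mulVec u)} := by
            refine Finset.sum_le_sum fun j hj => ?_
            refine mul_le_mul_of_nonneg_left (le_csSup hbdda ?_) (hlamb j)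
            exact ⟨j, (Finset.mem_filter.mp hj).2, rfl⟩
        _ = sSup {v : ℝ | ∃ j, kof j = k ∧
              v = φ j x + r j ⬝ᵥ u + (1 / 2) * (u ⬝ᵥ (R j).mulVec u)} := by
            rw [← Finset.sum_mul, hsumb k, one_mul]
    show (∑ j, lamb j * φ j x) - (lamc ⬝ᵥ hb x) + (ν ⬝ᵥ fx x)
        + sInf {v : ℝ | ∃ xp : Fin n → ℝ, v = -(ν ⬝ᵥ xp) + ∑ i, lama i * g i xp}
        + sInf {v : ℝ | ∃ u ∈ Uset, v =
          (ν ⬝ᵥ (Fu x).mulVec u + lamc ⬝ᵥ E.mulVec u + ∑ j, lamb j * (r j ⬝ᵥ u))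
          + (1 / 2) * (u ⬝ᵥ (∑ j, lamb j • R j).mulVec u)} ≤ _
    linarith [hz1, hz2, ha, hcE, hstage, hνsplit]
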